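/- arXiv:1706.09681 — 5 statements merged into one kernel-verified Lean document; each statement's English description precedes it below -/
import Mathlib

section
/- (Theorem 2.1) For λ ∈ ℝ, r a nonnegative integer, and nonnegative integers n, k with n ≥ k, the extended degenerate Stirling numbers of the second kind satisfy S_{2,r}(n+r, k+r | λ) = Σ_{l=k}^{n} Σ_{m=0}^{n−l} C(n,l) r^m λ^{n−m−l} S_1(n−l, m) S_{2,λ}(l, k). -/
open Finset

/-- The degenerate falling factorial `(x|λ)_n = x(x-λ)(x-2λ)⋯(x-(n-1)λ)`. -/
noncomputable def degFall (x lam : ℝ) (n : ℕ) : ℝ := ∏ i ∈ Finset.range n, (x - i * lam)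

/-- The formal power series `(1+λt)^{y/λ} = Σ_{m=0}^∞ (y|λ)_m t^m/m!`. -/
noncomputable def degExp (lam y : ℝ) : PowerSeries ℝ :=
  PowerSeries.mk fun m => degFall y lam m / m.factorial

/-- The degenerate Stirling numbers of the second kind `S_{2,λ}(n,k)`, defined by
`(1/k!)((1+λt)^{1/λ} - 1)^k = Σ_{n=k}^∞ S_{2,λ}(n,k) t^n/n!`. -/
noncomputable def degStirling2 (lam : ℝ) (n k : ℕ) : ℝ :=
  (n.factorial : ℝ) *
    PowerSeries.coeff n (((k.factorial : ℝ))⁻¹ • (degExp lam 1 - 1) ^ k)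

/-- The extended degenerate Stirling numbers of the second kind `S_{2,r}(n+r,k+r|λ)`,
defined by `(1/k!)(1+λt)^{r/λ}((1+λt)^{1/λ} - 1)^k = Σ_{n=k}^∞ S_{2,r}(n+r,k+r|λ) t^n/n!`. -/
noncomputable def extDegStirling2 (lam : ℝ) (r n k : ℕ) : ℝ :=
  (n.factorial : ℝ) *
    PowerSeries.coeff n
      (((k.factorial : ℝ))⁻¹ • (degExp lam r * (degExp lam 1 - 1) ^ k))

/-- The exponential `e^f = Σ_{k=0}^∞ f^k / k!` of a formal power series, computed
coefficientwise (the coefficientwise sums converge when `f` has zero constant term). -/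
noncomputable def expComp (f : PowerSeries ℝ) : PowerSeries ℝ :=
  PowerSeries.mk fun n => ∑' k : ℕ, PowerSeries.coeff n (f ^ k) / k.factorial

/-- The degenerate Bell polynomials, defined by
`e^{x((1+λt)^{1/λ} - 1)} = Σ_{n=0}^∞ Bel_{n,λ}(x) t^n/n!`. -/
noncomputable def degBell (lam x : ℝ) (n : ℕ) : ℝ :=
  (n.factorial : ℝ) * PowerSeries.coeff n (expComp (x • (degExp lam 1 - 1)))

/-- The extended degenerate Bell polynomials, defined by
`(1+λt)^{r/λ} e^{x((1+λt)^{1/λ} - 1)} = Σ_{n=0}^∞ Bel^{(r)}_{n,λ}(x) t^n/n!`. -/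
noncomputable def extDegBell (lam : ℝ) (r : ℕ) (x : ℝ) (n : ℕ) : ℝ :=
  (n.factorial : ℝ) *
    PowerSeries.coeff n (degExp lam r * expComp (x • (degExp lam 1 - 1)))

/-- The signed Stirling numbers of the first kind `S_1(n,k)`, defined by
`(x)_n = x(x-1)⋯(x-n+1) = Σ_{k=0}^n S_1(n,k) x^k`. -/
noncomputable def stirling1 (n k : ℕ) : ℝ :=
  (∏ i ∈ Finset.range n, (Polynomial.X - Polynomial.C (i : ℝ))).coeff k

/-- The Stirling numbers of the second kind, defined by
`(1/k!)(e^t - 1)^k = Σ_{n=k}^∞ S_2(n,k) t^n/n!`. -/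
noncomputable def stirling2 (n k : ℕ) : ℝ :=
  (n.factorial : ℝ) *
    PowerSeries.coeff n (((k.factorial : ℝ))⁻¹ • (PowerSeries.exp ℝ - 1) ^ k)

/-- The r-Stirling numbers of the second kind `S_{2,r}(n+r,k+r)`, defined by
`e^{rt}(1/k!)(e^t - 1)^k = Σ_{n=0}^∞ S_{2,r}(n+r,k+r) t^n/n!`. -/
noncomputable def rStirling2 (r n k : ℕ) : ℝ :=
  (n.factorial : ℝ) *
    PowerSeries.coeff n
      (PowerSeries.rescale (r : ℝ) (PowerSeries.exp ℝ) *
        ((k.factorial : ℝ))⁻¹ • (PowerSeries.exp ℝ - 1) ^ k)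

/-- The ordinary falling factorial `(x)_k = x(x-1)⋯(x-k+1)`. -/
noncomputable def fallFact (x : ℝ) (k : ℕ) : ℝ := ∏ i ∈ Finset.range k, (x - i)

lemma coeff_pow_eq_zero (lam : ℝ) (l k : ℕ) (hlk : l < k) :
    PowerSeries.coeff l ((degExp lam 1 - 1) ^ k) = 0 := by
  have h0 : PowerSeries.constantCoeff (degExp lam 1 - 1) = 0 := by
    simp [degExp, degFall, ← PowerSeries.coeff_zero_eq_constantCoeff]
  obtain ⟨g, hg⟩ := pow_dvd_pow_of_dvd (PowerSeries.X_dvd_iff.mpr h0) k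
  rw [hg, PowerSeries.coeff_mul]
  refine Finset.sum_eq_zero fun p hp => ?_
  have h1 : p.1 ≤ l := by
    have := Finset.HasAntidiagonal.mem_antidiagonal.mp hp; omega
  rw [PowerSeries.coeff_X_pow, if_neg (by omega), zero_mul]

lemma degStirling2_eq_zero (lam : ℝ) (l k : ℕ) (hlk : l < k) : degStirling2 lam l k = 0 := by
  rw [degStirling2, map_smul, smul_eq_mul, coeff_pow_eq_zero lam l k hlk, mul_zero, mul_zero]

lemma coeff_degStirling (lam : ℝ) (l k : ℕ) :
    PowerSeries.coeff l (((k.factorial : ℝ))⁻¹ • (degExp lam 1 - 1) ^ k)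
      = degStirling2 lam l k / l.factorial := by
  rw [degStirling2]
  field_simp

lemma degFall_eq_sum (x lam : ℝ) (j : ℕ) :
    degFall x lam j = ∑ m ∈ range (j + 1), x ^ m * lam ^ (j - m) * stirling1 j m := by
  set P : Polynomial ℝ := ∏ i ∈ Finset.range j, (Polynomial.X - Polynomial.C (i : ℝ)) with hP
  have hdeg : P.natDegree ≤ j := by
    refine le_trans (Polynomial.natDegree_prod_le _ _) (le_of_eq ?_)
    simp only [Polynomial.natDegree_X_sub_C, Finset.sum_const, Finset.card_range, smul_eq_mul,
      mul_one]
  rcases eq_or_ne lam 0 with hl | hl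
  · subst hl
    have hmon : P.Monic := Polynomial.monic_prod_of_monic _ _ fun i _ => Polynomial.monic_X_sub_C _
    have hdeg' : P.natDegree = j := by
      rw [hP, Polynomial.natDegree_prod]
      · simp only [Polynomial.natDegree_X_sub_C, Finset.sum_const, Finset.card_range, smul_eq_mul,
          mul_one]
      · intro i _; exact Polynomial.X_sub_C_ne_zero _
    have hj : stirling1 j j = 1 := by
      have := hmon.coeff_natDegree
      rwa [hdeg'] at this
    rw [Finset.sum_eq_single_of_mem j (by simp)]
    · simp [degFall, hj]
    · intro m hm hne
      have hmlt : m < j := lt_of_le_of_ne (Nat.lt_succ_iff.mp (mem_range.mp hm)) hne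
      simp [zero_pow (Nat.sub_ne_zero_of_lt hmlt)]
  · have heval : P.eval (x / lam) = ∑ m ∈ range (j + 1), P.coeff m * (x / lam) ^ m :=
      P.eval_eq_sum_range' (lt_of_le_of_lt hdeg (Nat.lt_succ_self j)) (x / lam)
    have h2 : lam ^ j * ∏ i ∈ range j, (x / lam - i) = ∏ i ∈ range j, (lam * (x / lam - i)) := by
      rw [Finset.prod_mul_distrib, Finset.prod_const, Finset.card_range]
    have h1 : degFall x lam j = lam ^ j * P.eval (x / lam) := by
      rw [hP, Polynomial.eval_prod]
      have : ∀ i ∈ range j, Polynomial.eval (x / lam) (Polynomial.X - Polynomial.C (i : ℝ))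
          = x / lam - i := by intro i _; simp
      rw [Finset.prod_congr rfl this, h2]
      refine Finset.prod_congr rfl fun i _ => ?_
      field_simp
    rw [h1, heval, Finset.mul_sum]
    refine Finset.sum_congr rfl fun m hm => ?_
    have hm' : m ≤ j := Nat.lt_succ_iff.mp (mem_range.mp hm)
    have hlam : lam ^ (j - m) * lam ^ m = lam ^ j := pow_sub_mul_pow lam hm'
    show lam ^ j * (P.coeff m * (x / lam) ^ m) = x ^ m * lam ^ (j - m) * P.coeff m
    rw [← hlam, div_pow]
    field_simp

theorem extDegStirling2_eq_sum (lam : ℝ) (r n k : ℕ) (h : k ≤ n) :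
    extDegStirling2 lam r n k =
      ∑ l ∈ Finset.Icc k n, ∑ m ∈ Finset.range (n - l + 1),
        (n.choose l : ℝ) * (r : ℝ) ^ m * lam ^ (n - m - l) * stirling1 (n - l) m *
          degStirling2 lam l k := by
  have hsub : ∑ l ∈ Finset.Icc k n, (∑ m ∈ Finset.range (n - l + 1),
        (n.choose l : ℝ) * (r : ℝ) ^ m * lam ^ (n - m - l) * stirling1 (n - l) m *
          degStirling2 lam l k)
      = ∑ l ∈ Finset.range (n + 1), ∑ m ∈ Finset.range (n - l + 1),
        (n.choose l : ℝ) * (r : ℝ) ^ m * lam ^ (n - m - l) * stirling1 (n - l) m *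
          degStirling2 lam l k := by
    refine Finset.sum_subset (fun l hl => ?_) (fun l hl hnot => ?_)
    · rw [Finset.mem_Icc] at hl; exact Finset.mem_range.mpr (by omega)
    · have hlk : l < k := by
        rw [Finset.mem_Icc] at hnot; rw [Finset.mem_range] at hl; omega
      exact Finset.sum_eq_zero fun m _ => by
        rw [degStirling2_eq_zero lam l k hlk, mul_zero]
  rw [hsub, extDegStirling2, mul_comm (degExp lam r), ← smul_mul_assoc,
    PowerSeries.coeff_mul, Finset.Nat.sum_antidiagonal_eq_sum_range_succ_mk, Finset.mul_sum]
  refine Finset.sum_congr rfl fun l hl => ?_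
  have hln : l ≤ n := Nat.lt_succ_iff.mp (Finset.mem_range.mp hl)
  rw [coeff_degStirling]
  simp only [degExp, PowerSeries.coeff_mk]
  rw [degFall_eq_sum (r : ℝ) lam (n - l)]
  rw [Finset.sum_div, Finset.mul_sum, Finset.mul_sum]
  refine Finset.sum_congr rfl fun m hm => ?_
  have h1 : (l.factorial : ℝ) ≠ 0 := Nat.cast_ne_zero.mpr l.factorial_ne_zero
  have h2 : ((n - l).factorial : ℝ) ≠ 0 := Nat.cast_ne_zero.mpr (n - l).factorial_ne_zero
  rw [Nat.cast_choose ℝ hln, Nat.sub_right_comm n m l]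
  field_simp
end

section
/- For λ ∈ ℝ, r a nonnegative integer, and nonnegative integers n, k with n ≥ k, the extended degenerate Stirling numbers of the second kind satisfy S_{2,r}(n+r, k+r | λ) = Σ_{m=0}^{n−k} C(m+k, m) C(r, m) m! S_{2,λ}(n, m+k), where C(r,m) = r(r−1)⋯(r−m+1)/m! is the binomial coefficient. -/
open Finset

lemma degFall_succ (x lam : ℝ) (n : ℕ) :
    degFall x lam (n + 1) = degFall x lam n * (x - n * lam) := by
  simp [degFall, Finset.prod_range_succ]

lemma degFall_add (lam x y : ℝ) (n : ℕ) :
    degFall (x + y) lam n =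
      ∑ j ∈ Finset.range (n + 1),
        (n.choose j : ℝ) * degFall x lam j * degFall y lam (n - j) := by
  induction n with
  | zero => simp [degFall]
  | succ n ih =>
    rw [degFall_succ, ih, Finset.sum_mul]
    have key : ∀ j ∈ Finset.range (n + 1),
        (n.choose j : ℝ) * degFall x lam j * degFall y lam (n - j) * (x + y - n * lam)
          = (n.choose j : ℝ) * degFall x lam (j + 1) * degFall y lam (n - j)
            + (n.choose j : ℝ) * degFall x lam j * degFall y lam (n - j + 1) := by
      intro j hj
      rw [Finset.mem_range, Nat.lt_succ_iff] at hj
      rw [degFall_succ, degFall_succ]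
      have hc : ((n - j : ℕ) : ℝ) = (n : ℝ) - j := by
        rw [Nat.cast_sub hj]
      rw [hc]; ring
    rw [Finset.sum_congr rfl key, Finset.sum_add_distrib]
    have hB : ∑ j ∈ Finset.range (n + 1),
        (n.choose j : ℝ) * degFall x lam j * degFall y lam (n - j + 1)
        = ∑ j ∈ Finset.range (n + 1),
            (n.choose j : ℝ) * degFall x lam j * degFall y lam (n + 1 - j) := by
      refine Finset.sum_congr rfl fun j hj => ?_
      rw [Finset.mem_range, Nat.lt_succ_iff] at hj
      rw [Nat.succ_sub hj]
    rw [hB]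
    have hB2 : ∑ j ∈ Finset.range (n + 1),
        (n.choose j : ℝ) * degFall x lam j * degFall y lam (n + 1 - j)
        = ∑ j ∈ Finset.range (n + 2),
            (n.choose j : ℝ) * degFall x lam j * degFall y lam (n + 1 - j) := by
      rw [Finset.sum_range_succ (n := n + 1)]
      simp
    rw [hB2, Finset.sum_range_succ' (fun j =>
      (n.choose j : ℝ) * degFall x lam j * degFall y lam (n + 1 - j)) (n + 1)]
    rw [Finset.sum_range_succ' (fun j =>
      ((n + 1).choose j : ℝ) * degFall x lam j * degFall y lam (n + 1 - j)) (n + 1)]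
    have hP : ∀ j ∈ Finset.range (n + 1),
        (((n + 1).choose (j + 1) : ℕ) : ℝ) * degFall x lam (j + 1) *
            degFall y lam (n + 1 - (j + 1))
          = (n.choose j : ℝ) * degFall x lam (j + 1) * degFall y lam (n - j)
            + (n.choose (j + 1) : ℝ) * degFall x lam (j + 1) * degFall y lam (n - j) := by
      intro j hj
      have : (n + 1).choose (j + 1) = n.choose j + n.choose (j + 1) :=
        Nat.choose_succ_succ n j
      rw [this, Nat.cast_add]
      have hs : n + 1 - (j + 1) = n - j := by omega
      rw [hs]; ring
    rw [Finset.sum_congr rfl hP, Finset.sum_add_distrib]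
    simp only [Nat.choose_zero_right, Nat.cast_one]
    have hs2 : ∀ j ∈ Finset.range (n + 1), n + 1 - (j + 1) = n - j := by omega
    have hrw : ∑ j ∈ Finset.range (n + 1),
        (n.choose (j + 1) : ℝ) * degFall x lam (j + 1) * degFall y lam (n + 1 - (j + 1))
        = ∑ j ∈ Finset.range (n + 1),
            (n.choose (j + 1) : ℝ) * degFall x lam (j + 1) * degFall y lam (n - j) := by
      refine Finset.sum_congr rfl fun j hj => ?_
      rw [hs2 j hj]
    rw [hrw]
    ring

lemma coeff_degExp (lam y : ℝ) (n : ℕ) :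
    PowerSeries.coeff n (degExp lam y) = degFall y lam n / n.factorial := by
  simp [degExp]

lemma degExp_add (lam x y : ℝ) : degExp lam (x + y) = degExp lam x * degExp lam y := by
  ext n
  rw [PowerSeries.coeff_mul, Finset.Nat.sum_antidiagonal_eq_sum_range_succ_mk]
  simp only [coeff_degExp]
  rw [degFall_add, Finset.sum_div]
  refine Finset.sum_congr rfl fun j hj => ?_
  rw [Finset.mem_range, Nat.lt_succ_iff] at hj
  have hfac : ((n.choose j : ℕ) : ℝ) * (j.factorial : ℝ) * ((n - j).factorial : ℝ)
      = (n.factorial : ℝ) := by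
    rw [← Nat.cast_mul, ← Nat.cast_mul, Nat.choose_mul_factorial_mul_factorial hj]
  have h1 : (j.factorial : ℝ) ≠ 0 := Nat.cast_ne_zero.mpr (Nat.factorial_ne_zero j)
  have h2 : ((n - j).factorial : ℝ) ≠ 0 := Nat.cast_ne_zero.mpr (Nat.factorial_ne_zero _)
  have h3 : (n.factorial : ℝ) ≠ 0 := Nat.cast_ne_zero.mpr (Nat.factorial_ne_zero n)
  field_simp
  rw [← hfac]; ring

lemma degExp_zero (lam : ℝ) : degExp lam 0 = 1 := by
  ext n
  cases n with
  | zero => simp [coeff_degExp, degFall]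
  | succ n =>
    rw [coeff_degExp]
    have : degFall 0 lam (n + 1) = 0 := by
      apply Finset.prod_eq_zero (Finset.mem_range.mpr (Nat.succ_pos n))
      simp
    simp [this]

lemma degExp_nat (lam : ℝ) (r : ℕ) : degExp lam r = degExp lam 1 ^ r := by
  induction r with
  | zero => simpa using degExp_zero lam
  | succ r ih =>
    have : ((r + 1 : ℕ) : ℝ) = (r : ℝ) + 1 := by push_cast; ring
    rw [this, degExp_add, ih, pow_succ]

lemma coeff_pow_sub_one_eq_zero (lam : ℝ) {j n : ℕ} (h : n < j) :
    PowerSeries.coeff n ((degExp lam 1 - 1) ^ j) = 0 := by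
  have hX : (PowerSeries.X : PowerSeries ℝ) ∣ (degExp lam 1 - 1) := by
    rw [PowerSeries.X_dvd_iff]
    rw [map_sub, ← PowerSeries.coeff_zero_eq_constantCoeff_apply, coeff_degExp]
    simp [degFall]
  have hXj : (PowerSeries.X : PowerSeries ℝ) ^ j ∣ (degExp lam 1 - 1) ^ j :=
    pow_dvd_pow_of_dvd hX j
  exact (PowerSeries.X_pow_dvd_iff.mp hXj) n h

theorem extDegStirling2_eq_sum_degStirling2 (lam : ℝ) (r n k : ℕ) (h : k ≤ n) :
    extDegStirling2 lam r n k =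
      ∑ m ∈ Finset.range (n - k + 1),
        ((m + k).choose m : ℝ) * (r.choose m : ℝ) * (m.factorial : ℝ) *
          degStirling2 lam n (m + k) := by
  set E : PowerSeries ℝ := degExp lam 1 with hEdef
  -- binomial expansion of `E ^ r`
  have hbin : degExp lam r = ∑ m ∈ Finset.range (r + 1),
      (E - 1) ^ m * ((r.choose m : ℕ) : PowerSeries ℝ) := by
    rw [degExp_nat lam r, ← hEdef]
    have := add_pow (E - 1) 1 r
    rw [sub_add_cancel] at this
    rw [this]
    refine Finset.sum_congr rfl fun m _ => by rw [one_pow, mul_one]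
  -- rewrite the LHS using the binomial expansion
  have hLHS : extDegStirling2 lam r n k =
      ∑ m ∈ Finset.range (r + 1),
        ((m + k).choose m : ℝ) * (r.choose m : ℝ) * (m.factorial : ℝ) *
          degStirling2 lam n (m + k) := by
    rw [extDegStirling2, hbin, Finset.sum_mul]
    have hprod : ∀ m, (E - 1) ^ m * ((r.choose m : ℕ) : PowerSeries ℝ) * (E - 1) ^ k
        = ((r.choose m : ℕ) : PowerSeries ℝ) * (E - 1) ^ (m + k) := by
      intro m; rw [pow_add]; ring
    simp only [← hEdef, hprod]
    rw [Finset.smul_sum, map_sum, Finset.mul_sum]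
    refine Finset.sum_congr rfl fun m _ => ?_
    rw [degStirling2]
    have hc : PowerSeries.coeff n ((k.factorial : ℝ)⁻¹ •
        (((r.choose m : ℕ) : PowerSeries ℝ) * (E - 1) ^ (m + k)))
        = (k.factorial : ℝ)⁻¹ * ((r.choose m : ℕ) : ℝ) *
            PowerSeries.coeff n ((E - 1) ^ (m + k)) := by
      rw [map_smul, smul_eq_mul]
      have : (((r.choose m : ℕ) : PowerSeries ℝ) * (E - 1) ^ (m + k))
          = ((r.choose m : ℕ) : ℝ) • (E - 1) ^ (m + k) := by
        rw [PowerSeries.smul_eq_C_mul]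
        norm_cast
      rw [this, map_smul, smul_eq_mul]; ring
    rw [hc]
    rw [map_smul, smul_eq_mul]
    have hfac : ((m + k).choose m : ℝ) * (m.factorial : ℝ) * (k.factorial : ℝ)
        = ((m + k).factorial : ℝ) := by
      rw [← Nat.cast_mul, ← Nat.cast_mul]
      congr 1
      have := Nat.choose_mul_factorial_mul_factorial (Nat.le_add_right m k)
      simpa [Nat.add_sub_cancel_left] using this
    have h1 : (k.factorial : ℝ) ≠ 0 := Nat.cast_ne_zero.mpr (Nat.factorial_ne_zero k)
    have h2 : ((m + k).factorial : ℝ) ≠ 0 := Nat.cast_ne_zero.mpr (Nat.factorial_ne_zero _)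
    field_simp
    rw [← hfac]; ring
  rw [hLHS]
  -- both sums equal the sum over the common range
  set g : ℕ → ℝ := fun m =>
    ((m + k).choose m : ℝ) * (r.choose m : ℝ) * (m.factorial : ℝ) *
      degStirling2 lam n (m + k) with hg
  have hgr : ∀ m, r < m → g m = 0 := by
    intro m hm
    simp [hg, Nat.choose_eq_zero_of_lt hm]
  have hgn : ∀ m, n - k < m → g m = 0 := by
    intro m hm
    have hlt : n < m + k := by omega
    have : degStirling2 lam n (m + k) = 0 := by
      rw [degStirling2, map_smul, smul_eq_mul,
        coeff_pow_sub_one_eq_zero lam hlt]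
      ring
    simp [hg, this]
  have key : ∀ N : ℕ, r + 1 ≤ N → n - k + 1 ≤ N →
      (∑ m ∈ Finset.range (r + 1), g m = ∑ m ∈ Finset.range N, g m)
        ∧ (∑ m ∈ Finset.range (n - k + 1), g m = ∑ m ∈ Finset.range N, g m) := by
    intro N h1 h2
    constructor
    · apply Finset.sum_subset (Finset.range_subset_range.mpr h1)
      intro m _ hm
      rw [Finset.mem_range, not_lt] at hm
      exact hgr m (by omega)
    · apply Finset.sum_subset (Finset.range_subset_range.mpr h2)
      intro m _ hm
      rw [Finset.mem_range, not_lt] at hm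
      exact hgn m (by omega)
  obtain ⟨e1, e2⟩ := key (max (r + 1) (n - k + 1)) (le_max_left _ _) (le_max_right _ _)
  rw [e1, ← e2]
end

section
/- (Theorem 2.3, first identity) For λ ∈ ℝ, r a nonnegative integer, every nonnegative integer n, and every real x, the extended degenerate Bell polynomial satisfies Bel^{(r)}_{n,λ}(x) = Σ_{k=0}^{n} x^k S_{2,r}(n+r, k+r | λ). -/
open Finset

lemma const0 (lam : ℝ) : PowerSeries.constantCoeff (degExp lam 1 - 1) = 0 := by
  rw [← PowerSeries.coeff_zero_eq_constantCoeff_apply]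
  simp [degExp, degFall]

lemma coeff_pow_zero {f : PowerSeries ℝ} (h : PowerSeries.constantCoeff f = 0)
    {n k : ℕ} (hnk : n < k) : PowerSeries.coeff n (f ^ k) = 0 :=
  PowerSeries.X_pow_dvd_iff.mp (pow_dvd_pow_of_dvd (PowerSeries.X_dvd_iff.mpr h) k) n hnk

theorem extDegBell_eq_sum_extDegStirling2 (lam : ℝ) (r : ℕ) (n : ℕ) (x : ℝ) :
    extDegBell lam r x n =
      ∑ k ∈ Finset.range (n + 1), x ^ k * extDegStirling2 lam r n k := by
  set g := degExp lam (r : ℝ) with hg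
  set h := degExp lam 1 - 1 with hh
  have hf0 : PowerSeries.constantCoeff (x • h) = 0 := by
    rw [← PowerSeries.coeff_zero_eq_constantCoeff_apply, map_smul,
      PowerSeries.coeff_zero_eq_constantCoeff_apply, const0, smul_zero]
  rw [extDegBell, PowerSeries.coeff_mul]
  have key : ∀ p ∈ Finset.HasAntidiagonal.antidiagonal n,
      PowerSeries.coeff p.1 g * PowerSeries.coeff p.2 (expComp (x • h)) =
      ∑ k ∈ Finset.range (n + 1),
        PowerSeries.coeff p.1 g * (PowerSeries.coeff p.2 ((x • h) ^ k) / k.factorial) := by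
    intro p hp
    have hp2 : p.2 ≤ n := Finset.HasAntidiagonal.antidiagonal.snd_le hp
    rw [expComp, PowerSeries.coeff_mk]
    rw [tsum_eq_sum (s := Finset.range (n + 1)) (by
      intro k hk
      rw [coeff_pow_zero hf0 (lt_of_le_of_lt hp2 (by simpa using hk))]
      simp)]
    rw [Finset.mul_sum]
  rw [Finset.sum_congr rfl key, Finset.sum_comm]
  rw [Finset.mul_sum, Finset.sum_congr rfl]
  intro k _
  rw [extDegStirling2]
  have : ∑ p ∈ Finset.HasAntidiagonal.antidiagonal n,
      PowerSeries.coeff p.1 g * (PowerSeries.coeff p.2 ((x • h) ^ k) / k.factorial) =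
      (∑ p ∈ Finset.HasAntidiagonal.antidiagonal n,
        PowerSeries.coeff p.1 g * PowerSeries.coeff p.2 ((x • h) ^ k)) / k.factorial := by
    rw [Finset.sum_div]
    exact Finset.sum_congr rfl fun p _ => by ring
  rw [this, ← PowerSeries.coeff_mul]
  have hpow : (x • h) ^ k = (x ^ k) • (h ^ k) := smul_pow x h k
  rw [hpow, mul_smul_comm, map_smul, map_smul]
  simp only [smul_eq_mul]
  ring
end

section
/- (Theorem 2.5) For λ ∈ ℝ, r a nonnegative integer, every nonnegative integer n, and every real x, the extended degenerate Bell polynomial satisfies Bel^{(r)}_{n,λ}(x) = Σ_{k=0}^{n} Σ_{m=0}^{k} C(n,k) Bel_{n−k,λ}(x) λ^{k−m} r^m S_1(k,m). -/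
open Finset

lemma stirling1_monic (k : ℕ) :
    (∏ i ∈ Finset.range k, (Polynomial.X - Polynomial.C (i : ℝ))).Monic :=
  Polynomial.monic_prod_of_monic _ _ fun i _ => Polynomial.monic_X_sub_C _

lemma stirling1_natDegree (k : ℕ) :
    (∏ i ∈ Finset.range k, (Polynomial.X - Polynomial.C (i : ℝ))).natDegree = k := by
  rw [Polynomial.natDegree_prod_of_monic _ _ fun i _ => Polynomial.monic_X_sub_C _]
  simp only [Polynomial.natDegree_X_sub_C, Finset.sum_const, smul_eq_mul, mul_one, Finset.card_range]

lemma degFall_key (lam r : ℝ) (k : ℕ) :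
    degFall r lam k = ∑ m ∈ Finset.range (k + 1), stirling1 k m * r ^ m * lam ^ (k - m) := by
  by_cases hlam : lam = 0
  · subst hlam
    have hL : degFall r 0 k = r ^ k := by simp [degFall]
    rw [hL, Finset.sum_eq_single k]
    · have : stirling1 k k = 1 := by
        have := (stirling1_monic k).coeff_natDegree
        rwa [stirling1_natDegree] at this
      simp [this]
    · intro m hm hmk
      have : m < k := lt_of_le_of_ne (Nat.lt_succ_iff.mp (Finset.mem_range.mp hm)) hmk
      rw [zero_pow (by omega), mul_zero]
    · intro h; exact absurd (Finset.self_mem_range_succ k) h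
  · have h1 : degFall r lam k = lam ^ k * ∏ i ∈ Finset.range k, (r / lam - i) := by
      have h0 : lam ^ k * ∏ i ∈ Finset.range k, (r / lam - i)
          = ∏ i ∈ Finset.range k, (lam * (r / lam - i)) := by
        rw [Finset.prod_mul_distrib, Finset.prod_const, Finset.card_range]
      rw [degFall, h0]
      exact Finset.prod_congr rfl fun i _ => by field_simp
    have h2 : (∏ i ∈ Finset.range k, (r / lam - i)) =
        Polynomial.eval (r / lam) (∏ i ∈ Finset.range k, (Polynomial.X - Polynomial.C (i : ℝ))) := by
      simp [Polynomial.eval_prod]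
    have h3 : Polynomial.eval (r / lam) (∏ i ∈ Finset.range k, (Polynomial.X - Polynomial.C (i : ℝ)))
        = ∑ m ∈ Finset.range (k + 1), stirling1 k m * (r / lam) ^ m := by
      rw [Polynomial.eval_eq_sum_range' (lt_of_le_of_lt (le_of_eq (stirling1_natDegree k)) (Nat.lt_succ_self k))]
      rfl
    rw [h1, h2, h3, Finset.mul_sum]
    refine Finset.sum_congr rfl fun m hm => ?_
    have hmk : m ≤ k := Nat.lt_succ_iff.mp (Finset.mem_range.mp hm)
    rw [pow_sub₀ lam hlam hmk, div_pow]
    field_simp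

theorem extDegBell_eq_sum_degBell (lam : ℝ) (r : ℕ) (n : ℕ) (x : ℝ) :
    extDegBell lam r x n =
      ∑ k ∈ Finset.range (n + 1), ∑ m ∈ Finset.range (k + 1),
        (n.choose k : ℝ) * degBell lam x (n - k) * lam ^ (k - m) * (r : ℝ) ^ m *
          stirling1 k m := by
  unfold extDegBell
  rw [PowerSeries.coeff_mul, Finset.Nat.sum_antidiagonal_eq_sum_range_succ_mk, Finset.mul_sum]
  refine Finset.sum_congr rfl fun k hk => ?_
  have hk' : k ≤ n := Nat.lt_succ_iff.mp (Finset.mem_range.mp hk)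
  have hA : PowerSeries.coeff k (degExp lam r) = degFall r lam k / k.factorial :=
    PowerSeries.coeff_mk _ _
  have hB : PowerSeries.coeff (n - k) (expComp (x • (degExp lam 1 - 1)))
      = degBell lam x (n - k) / (n - k).factorial := by
    unfold degBell
    field_simp
  rw [hA, hB, degFall_key, Finset.sum_div, Finset.sum_mul, Finset.mul_sum]
  refine Finset.sum_congr rfl fun m hm => ?_
  rw [Nat.cast_choose ℝ hk']
  have h1 : (k.factorial : ℝ) ≠ 0 := Nat.cast_ne_zero.mpr k.factorial_ne_zero
  have h2 : ((n - k).factorial : ℝ) ≠ 0 := Nat.cast_ne_zero.mpr (n - k).factorial_ne_zero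
  field_simp
end

section
/- (Theorem 2.6) For λ ∈ ℝ, r a nonnegative integer, and nonnegative integers n, m, k with n ≥ m+k, one has C(m+k, m) S_{2,r}(n+r, m+k+r | λ) = Σ_{l=m}^{n−k} C(n,l) S_{2,r}(l+r, m+r | λ) S_{2,λ}(n−l, k). -/
open Finset

lemma coeff_pow_mul_eq_zero {f g : PowerSeries ℝ}
    (hf : PowerSeries.constantCoeff f = 0) (k j : ℕ) (hj : j < k) :
    PowerSeries.coeff j (f ^ k * g) = 0 := by
  have h1 : (PowerSeries.X : PowerSeries ℝ) ∣ f := PowerSeries.X_dvd_iff.mpr hf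
  have h2 : (PowerSeries.X : PowerSeries ℝ) ^ k ∣ f ^ k * g :=
    Dvd.dvd.mul_right (pow_dvd_pow_of_dvd h1 k) g
  rw [PowerSeries.X_pow_dvd_iff] at h2
  exact h2 j hj

theorem choose_mul_extDegStirling2_eq (lam : ℝ) (r n m k : ℕ) (h : m + k ≤ n) :
    ((m + k).choose m : ℝ) * extDegStirling2 lam r n (m + k) =
      ∑ l ∈ Finset.Icc m (n - k),
        (n.choose l : ℝ) * extDegStirling2 lam r l m * degStirling2 lam (n - l) k := by

  classical
  set A := degExp lam r with hA
  set B := degExp lam 1 - 1 with hBdef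
  have hB0 : PowerSeries.constantCoeff B = 0 := by
    simp [hBdef, degExp, degFall, PowerSeries.constantCoeff_mk]
  set c : ℕ → ℝ := fun l => PowerSeries.coeff l (A * B ^ m) with hc
  set d : ℕ → ℝ := fun j => PowerSeries.coeff j (B ^ k) with hd
  have hcz : ∀ l < m, c l = 0 := by
    intro l hl
    have := coeff_pow_mul_eq_zero hB0 m l hl (g := A)
    simpa [hc, mul_comm] using this
  have hdz : ∀ j < k, d j = 0 := by
    intro j hj
    have := coeff_pow_mul_eq_zero hB0 k j hj (g := (1 : PowerSeries ℝ))
    simpa [hd] using this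
  have hcoeff : PowerSeries.coeff n (A * B ^ (m + k)) =
      ∑ l ∈ Finset.range (n + 1), c l * d (n - l) := by
    rw [pow_add, ← mul_assoc, PowerSeries.coeff_mul,
      Finset.Nat.sum_antidiagonal_eq_sum_range_succ_mk]
  have hsub : Finset.Icc m (n - k) ⊆ Finset.range (n + 1) := by
    intro l hl
    simp only [Finset.mem_Icc] at hl
    simp only [Finset.mem_range]
    omega
  have hext : ∑ l ∈ Finset.Icc m (n - k),
        (n.choose l : ℝ) * extDegStirling2 lam r l m * degStirling2 lam (n - l) k =
      ∑ l ∈ Finset.range (n + 1),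
        (n.choose l : ℝ) * extDegStirling2 lam r l m * degStirling2 lam (n - l) k := by
    refine Finset.sum_subset hsub ?_
    intro l hl hnot
    simp only [Finset.mem_range] at hl
    simp only [Finset.mem_Icc, not_and_or, not_le] at hnot
    rcases hnot with hlm | hlk
    · have : extDegStirling2 lam r l m = 0 := by
        unfold extDegStirling2
        rw [map_smul]
        have := hcz l hlm
        simp only [hc] at this
        simp [this]
        exact Or.inr (Or.inr this)
      simp [this]
    · have hnk : n - l < k := by omega
      have : degStirling2 lam (n - l) k = 0 := by
        unfold degStirling2
        rw [map_smul]
        have := hdz (n - l) hnk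
        simp only [hd] at this
        simp [this]
        exact Or.inr (Or.inr this)
      simp [this]
  rw [hext]
  have hLHS : ((m + k).choose m : ℝ) * extDegStirling2 lam r n (m + k) =
      ((m + k).choose m : ℝ) * (n.factorial : ℝ) * (((m + k).factorial : ℝ))⁻¹ *
        ∑ l ∈ Finset.range (n + 1), c l * d (n - l) := by
    unfold extDegStirling2
    rw [map_smul]
    rw [hcoeff]
    simp only [smul_eq_mul]
    ring
  rw [hLHS, Finset.mul_sum]
  refine Finset.sum_congr rfl ?_
  intro l hl
  simp only [Finset.mem_range] at hl
  have hln : l ≤ n := by omega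
  unfold extDegStirling2 degStirling2
  rw [map_smul, map_smul]
  have hcl : PowerSeries.coeff l (degExp lam r * (degExp lam 1 - 1) ^ m) = c l := rfl
  have hdl : PowerSeries.coeff (n - l) ((degExp lam 1 - 1) ^ k) = d (n - l) := rfl
  rw [hcl, hdl]
  have h1 : ((n.choose l : ℕ) : ℝ) * l.factorial * (n - l).factorial = n.factorial := by
    exact_mod_cast Nat.choose_mul_factorial_mul_factorial hln
  have h2 : ((m + k).choose m : ℝ) * (m.factorial : ℝ) * (k.factorial : ℝ)
      = ((m + k).factorial : ℝ) := by
    have := Nat.choose_mul_factorial_mul_factorial (Nat.le_add_right m k)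
    have h3 : m + k - m = k := by omega
    rw [h3] at this
    exact_mod_cast this
  have fm : (m.factorial : ℝ) ≠ 0 := Nat.cast_ne_zero.mpr m.factorial_ne_zero
  have fk : (k.factorial : ℝ) ≠ 0 := Nat.cast_ne_zero.mpr k.factorial_ne_zero
  have fmk : (((m + k).factorial : ℝ)) ≠ 0 := Nat.cast_ne_zero.mpr (m + k).factorial_ne_zero
  simp only [smul_eq_mul]
  have key : ((m + k).choose m : ℝ) * (n.factorial : ℝ) * (((m + k).factorial : ℝ))⁻¹ =
      (n.choose l : ℝ) * (l.factorial : ℝ) * ((n - l).factorial : ℝ) *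
        ((m.factorial : ℝ))⁻¹ * ((k.factorial : ℝ))⁻¹ := by
    field_simp
    nlinarith [h1, h2]
  linear_combination c l * d (n - l) * key
end
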